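/- Let P(x,t) be a polynomial on ℝ^{d+1} which is monic of degree m in t, and let d(x) = min { |Im ζ| : P(x,ζ) = 0 }. Let a > 0. If there exist C, R > 0 with |x|^a ≤ C d(x) for |x| ≥ R, and P(x,t) ≠ 0 for |x| ≥ R and t ∈ ℝ, then there exist C', R' > 0 such that for all 1 ≤ k ≤ m: |x|^{ak} |∂_t^k P(x,t)| ≤ C' |P(x,t)| for |x| ≥ R', t ∈ ℝ. -/

import Mathlib

/-- `P(x,ζ) = ∑_{k=0}^m Q_k(x) ζ^k`, a polynomial in `ζ` with coefficients
depending on `x ∈ ℝ^d`. -/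
noncomputable def Ppoly (d m : ℕ) (Q : ℕ → EuclideanSpace ℝ (Fin d) → ℂ)
    (x : EuclideanSpace ℝ (Fin d)) (ζ : ℂ) : ℂ :=
  ∑ k ∈ Finset.range (m + 1), Q k x * ζ ^ k

/-- `d(x) = min { |Im ζ| : ζ ∈ ℂ, P(x,ζ) = 0 }`. -/
noncomputable def rootImDist (d m : ℕ) (Q : ℕ → EuclideanSpace ℝ (Fin d) → ℂ)
    (x : EuclideanSpace ℝ (Fin d)) : ℝ :=
  sInf {y : ℝ | ∃ ζ : ℂ, Ppoly d m Q x ζ = 0 ∧ y = |ζ.im|}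

open Polynomial Complex Metric

lemma iteratedDeriv_polyReal (k : ℕ) (q : ℂ[X]) :
    iteratedDeriv k (fun s : ℝ => q.eval (s : ℂ)) =
      fun t : ℝ => (derivative^[k] q).eval (t : ℂ) := by
  induction k generalizing q with
  | zero => simp [iteratedDeriv_zero]
  | succ n ih =>
    rw [iteratedDeriv_succ']
    have : deriv (fun s : ℝ => q.eval (s : ℂ)) = fun t : ℝ => q.derivative.eval (t : ℂ) := by
      funext t
      exact ((q.hasDerivAt (t : ℂ)).comp_ofReal).deriv
    rw [this, ih, Function.iterate_succ_apply]

lemma iteratedDeriv_polyComplex (k : ℕ) (q : ℂ[X]) :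
    iteratedDeriv k (fun z : ℂ => q.eval z) =
      fun z : ℂ => (derivative^[k] q).eval z := by
  induction k generalizing q with
  | zero => simp [iteratedDeriv_zero]
  | succ n ih =>
    rw [iteratedDeriv_succ']
    have : deriv (fun z : ℂ => q.eval z) = fun z : ℂ => q.derivative.eval z := by
      funext z; exact q.deriv
    rw [this, ih, Function.iterate_succ_apply]

lemma cauchy_poly_est {f : ℂ → ℂ} (hf : Differentiable ℂ f) {c : ℂ} {δ M : ℝ} (hδ : 0 < δ)
    (hM : ∀ z : ℂ, ‖z - c‖ = δ → ‖f z‖ ≤ M) (k : ℕ) :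
    ‖iteratedDeriv k f c‖ ≤ k.factorial * M * δ⁻¹ ^ k := by
  have hM0 : 0 ≤ M := le_trans (norm_nonneg _) (hM (circleMap c δ 0) (by simp [circleMap_sub_center, norm_circleMap_zero, abs_of_pos hδ]))
  lift δ to NNReal using hδ.le with R hR
  have hR0 : 0 < R := by exact_mod_cast hδ
  have H := hf.hasFPowerSeriesOnBall c hR0
  have hcoeff := H.factorial_smul (1 : ℂ) k
  have h1 : iteratedDeriv k f c = (k.factorial : ℂ) * (cauchyPowerSeries f c R k fun _ => 1) := by
    rw [iteratedDeriv_eq_iteratedFDeriv, ← hcoeff, nsmul_eq_mul]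
  rw [h1, norm_mul, Complex.norm_natCast]
  have h2 : ‖cauchyPowerSeries f c R k fun _ => 1‖ ≤ ‖cauchyPowerSeries f c R k‖ := by
    have := (cauchyPowerSeries f c R k).le_opNorm fun _ => 1
    simpa using this
  have h3 : ‖cauchyPowerSeries f c (R : ℝ) k‖ ≤
      ((2 * Real.pi)⁻¹ * ∫ θ : ℝ in (0)..2 * Real.pi, ‖f (circleMap c R θ)‖) * |(R : ℝ)|⁻¹ ^ k :=
    norm_cauchyPowerSeries_le f c R k
  have hint : (∫ θ : ℝ in (0)..2 * Real.pi, ‖f (circleMap c R θ)‖) ≤ 2 * Real.pi * M := by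
    have : (∫ θ : ℝ in (0)..2 * Real.pi, ‖f (circleMap c R θ)‖) ≤
        ∫ _ : ℝ in (0)..2 * Real.pi, M := by
      apply intervalIntegral.integral_mono_on Real.two_pi_pos.le
      · exact ((hf.continuous.comp (continuous_circleMap c R)).norm).intervalIntegrable _ _
      · exact intervalIntegrable_const
      · intro θ _
        exact hM _ (by simp [circleMap_sub_center, norm_circleMap_zero, abs_of_pos hδ])
    simpa [mul_comm] using this
  have h4 : ‖cauchyPowerSeries f c (R : ℝ) k‖ ≤ M * |(R : ℝ)|⁻¹ ^ k := by
    refine h3.trans (mul_le_mul_of_nonneg_right ?_ (by positivity))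
    calc (2 * Real.pi)⁻¹ * ∫ θ : ℝ in (0)..2 * Real.pi, ‖f (circleMap c R θ)‖
        ≤ (2 * Real.pi)⁻¹ * (2 * Real.pi * M) :=
          mul_le_mul_of_nonneg_left hint (by positivity)
      _ = M := by field_simp
  have h5 : ‖cauchyPowerSeries f c (R:ℝ) k fun _ => 1‖ ≤ M * ((R:ℝ))⁻¹ ^ k := by
    refine h2.trans (h4.trans ?_)
    rw [abs_of_pos hδ]
  calc (k.factorial : ℝ) * ‖cauchyPowerSeries f c (R:ℝ) k fun _ => 1‖
      ≤ (k.factorial : ℝ) * (M * ((R:ℝ))⁻¹ ^ k) := mul_le_mul_of_nonneg_left h5 (by positivity)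
    _ = k.factorial * M * ((R:ℝ))⁻¹ ^ k := by ring

/-- Lemma 2.2, (ii) ⇒ (i): let `P(x,t)` be monic of degree `m` in `t` with
`P(x,t) ≠ 0` for `|x| ≥ R`, `t ∈ ℝ`, and `|x|^a ≤ C d(x)` for `|x| ≥ R`.  Then
there are `C', R' > 0` with `|x|^{a k} |∂_t^k P(x,t)| ≤ C' |P(x,t)|` for all
`1 ≤ k ≤ m`, `|x| ≥ R'` and `t ∈ ℝ`. -/
theorem deriv_bound_of_rootImDist (d m : ℕ) (hm : 1 ≤ m)
    (Q : ℕ → EuclideanSpace ℝ (Fin d) → ℂ) (hQm : ∀ x, Q m x = 1)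
    (a : ℝ) (ha : 0 < a)
    (h : ∃ C R : ℝ, 0 < C ∧ 0 < R ∧
      (∀ (x : EuclideanSpace ℝ (Fin d)) (t : ℝ), R ≤ ‖x‖ →
        Ppoly d m Q x (t : ℂ) ≠ 0) ∧
      (∀ x : EuclideanSpace ℝ (Fin d), R ≤ ‖x‖ →
        ‖x‖ ^ a ≤ C * rootImDist d m Q x)) :
    ∃ C' R' : ℝ, 0 < C' ∧ 0 < R' ∧
      ∀ k : ℕ, 1 ≤ k → k ≤ m →
        ∀ (x : EuclideanSpace ℝ (Fin d)) (t : ℝ), R' ≤ ‖x‖ →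
          ‖x‖ ^ (a * k) * ‖iteratedDeriv k (fun s : ℝ => Ppoly d m Q x (s : ℂ)) t‖
            ≤ C' * ‖Ppoly d m Q x (t : ℂ)‖ := by
  obtain ⟨C, R, hC, hR, hPne, hdist⟩ := h
  refine ⟨(max C 1) ^ m * m.factorial * 2 ^ m, max R 1, by positivity, lt_of_lt_of_le one_pos (le_max_right _ _), ?_⟩
  intro k hk1 hkm x t hx
  have hxR : R ≤ ‖x‖ := le_trans (le_max_left _ _) hx
  have hx1 : (1 : ℝ) ≤ ‖x‖ := le_trans (le_max_right _ _) hx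
  -- the polynomial
  set p : ℂ[X] := ∑ j ∈ Finset.range (m + 1), Polynomial.C (Q j x) * Polynomial.X ^ j with hp
  have heval : ∀ z : ℂ, p.eval z = Ppoly d m Q x z := by
    intro z
    simp [hp, Ppoly, eval_finset_sum]
  have hdegle : p.natDegree ≤ m := by
    apply natDegree_sum_le_of_forall_le
    intro i hi
    exact le_trans (natDegree_C_mul_X_pow_le _ _) (Nat.lt_succ_iff.mp (Finset.mem_range.mp hi))
  have hcm : p.coeff m = 1 := by
    rw [hp, finset_sum_coeff]
    simp only [coeff_C_mul, coeff_X_pow]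
    rw [Finset.sum_eq_single m]
    · simp [hQm x]
    · intro b _ hb
      simp [hb, Ne.symm hb]
    · intro hmem
      exact absurd (Finset.self_mem_range_succ m) hmem
  have hmonic : p.Monic := monic_of_natDegree_le_of_coeff_eq_one m hdegle hcm
  have hdeg : p.natDegree = m :=
    le_antisymm hdegle (le_natDegree_of_ne_zero (by rw [hcm]; exact one_ne_zero))
  have hsplits : Splits p := IsAlgClosed.splits p
  have hcard : p.roots.card = m := by
    rw [← hdeg]
    exact (splits_iff_card_roots).mp hsplits
  have hfact : p = (p.roots.map fun a => Polynomial.X - Polynomial.C a).prod :=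
    hsplits.eq_prod_roots_of_monic hmonic
  have heval_prod : ∀ z : ℂ, p.eval z = (p.roots.map fun a => z - a).prod := by
    intro z
    conv_lhs => rw [hfact]
    rw [eval_multiset_prod, Multiset.map_map]
    simp
  have habs : ∀ z : ℂ, ‖p.eval z‖ = (p.roots.map fun a => ‖z - a‖).prod := by
    intro z
    rw [heval_prod z]
    have := map_multiset_prod (normHom : ℂ →*₀ ℝ) (p.roots.map fun a => z - a)
    rw [Multiset.map_map] at this
    simpa using this
  -- the distance
  set δ := rootImDist d m Q x with hδdef
  have hbdd : BddBelow {y : ℝ | ∃ ζ : ℂ, Ppoly d m Q x ζ = 0 ∧ y = |ζ.im|} :=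
    ⟨0, fun y hy => by obtain ⟨ζ, -, rfl⟩ := hy; exact abs_nonneg _⟩
  have hδle : ∀ r ∈ p.roots, δ ≤ |r.im| := by
    intro r hr
    apply csInf_le hbdd
    exact ⟨r, by rw [← heval]; exact ((mem_roots'.mp hr).2), rfl⟩
  have hxa1 : (1 : ℝ) ≤ ‖x‖ ^ a := by
    calc (1:ℝ) = 1 ^ a := (Real.one_rpow a).symm
    _ ≤ ‖x‖ ^ a := Real.rpow_le_rpow zero_le_one hx1 ha.le
  have hCδ : ‖x‖ ^ a ≤ C * δ := hdist x hxR
  have hδpos : 0 < δ := by nlinarith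
  -- circle bound
  have hM : ∀ z : ℂ, ‖z - (t : ℂ)‖ = δ → ‖p.eval z‖ ≤ 2 ^ m * ‖p.eval (t : ℂ)‖ := by
    intro z hz
    rw [habs z, habs (t : ℂ)]
    have hterm : ∀ r ∈ p.roots, ‖z - r‖ ≤ 2 * ‖(t : ℂ) - r‖ := by
      intro r hr
      have h1 : δ ≤ ‖(t : ℂ) - r‖ := by
        refine le_trans (hδle r hr) ?_
        have : |((t : ℂ) - r).im| = |r.im| := by simp
        rw [← this]
        exact (Complex.abs_im_le_norm _)
      calc ‖z - r‖ = ‖(z - (t : ℂ)) + ((t : ℂ) - r)‖ := by ring_nf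
        _ ≤ ‖z - (t : ℂ)‖ + ‖(t : ℂ) - r‖ := norm_add_le _ _
        _ = δ + ‖(t : ℂ) - r‖ := by rw [hz]
        _ ≤ ‖(t : ℂ) - r‖ + ‖(t : ℂ) - r‖ := by linarith
        _ = 2 * ‖(t : ℂ) - r‖ := by ring
    calc (p.roots.map fun r => ‖z - r‖).prod
        ≤ (p.roots.map fun r => 2 * ‖(t : ℂ) - r‖).prod :=
          Multiset.prod_map_le_prod_map₀ _ _ (fun r _ => norm_nonneg _) hterm
      _ = (p.roots.map fun _ => (2:ℝ)).prod * (p.roots.map fun r => ‖(t : ℂ) - r‖).prod := by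
          rw [← Multiset.prod_map_mul]
      _ = 2 ^ m * (p.roots.map fun r => ‖(t : ℂ) - r‖).prod := by
          rw [Multiset.map_const', Multiset.prod_replicate, hcard]
  -- Cauchy estimate
  have hcauchy := cauchy_poly_est (f := fun z : ℂ => p.eval z) (p.differentiable)
    (c := (t : ℂ)) hδpos hM k
  -- identify real iterated derivative
  have hfun : (fun s : ℝ => Ppoly d m Q x (s : ℂ)) = fun s : ℝ => p.eval (s : ℂ) := by
    funext s; rw [heval]
  have hid : ‖iteratedDeriv k (fun s : ℝ => Ppoly d m Q x (s : ℂ)) t‖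
      = ‖iteratedDeriv k (fun z : ℂ => p.eval z) (t : ℂ)‖ := by
    rw [hfun, iteratedDeriv_polyReal, iteratedDeriv_polyComplex]
  rw [hid, ← heval]
  -- numeric assembly
  set PP := ‖p.eval (t : ℂ)‖ with hPP
  set X := ‖x‖ ^ (a * k) with hX
  have hX0 : 0 ≤ X := Real.rpow_nonneg (norm_nonneg x) _
  have hXD : X * δ⁻¹ ^ k ≤ C ^ k := by
    have h1 : X = (‖x‖ ^ a) ^ k := by
      rw [hX, ← Real.rpow_natCast (‖x‖ ^ a) k, ← Real.rpow_mul (norm_nonneg x)]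
    have h2 : (‖x‖ ^ a) ^ k ≤ (C * δ) ^ k :=
      pow_le_pow_left₀ (Real.rpow_nonneg (norm_nonneg x) a) hCδ k
    calc X * δ⁻¹ ^ k ≤ (C * δ) ^ k * δ⁻¹ ^ k := by
          rw [h1]
          exact mul_le_mul_of_nonneg_right h2 (by positivity)
      _ = C ^ k * (δ * δ⁻¹) ^ k := by rw [mul_pow, mul_pow]; ring
      _ = C ^ k := by rw [mul_inv_cancel₀ hδpos.ne', one_pow, mul_one]
  have hconst : C ^ k * (k.factorial : ℝ) * 2 ^ m ≤ (max C 1) ^ m * m.factorial * 2 ^ m := by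
    have h1 : C ^ k ≤ (max C 1) ^ m := by
      calc C ^ k ≤ (max C 1) ^ k := pow_le_pow_left₀ hC.le (le_max_left _ _) k
        _ ≤ (max C 1) ^ m := pow_le_pow_right₀ (le_max_right _ _) hkm
    have h2 : (k.factorial : ℝ) ≤ (m.factorial : ℝ) := by
      exact_mod_cast Nat.factorial_le hkm
    have := mul_le_mul h1 h2 (by positivity) (by positivity)
    exact mul_le_mul_of_nonneg_right this (by positivity)
  have hPP0 : (0:ℝ) ≤ PP := norm_nonneg _
  calc X * ‖iteratedDeriv k (fun z : ℂ => p.eval z) (t : ℂ)‖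
      ≤ X * ((k.factorial : ℝ) * (2 ^ m * PP) * δ⁻¹ ^ k) :=
        mul_le_mul_of_nonneg_left hcauchy hX0
    _ = (X * δ⁻¹ ^ k) * ((k.factorial : ℝ) * 2 ^ m * PP) := by ring
    _ ≤ C ^ k * ((k.factorial : ℝ) * 2 ^ m * PP) :=
        mul_le_mul_of_nonneg_right hXD (by positivity)
    _ = (C ^ k * (k.factorial : ℝ) * 2 ^ m) * PP := by ring
    _ ≤ ((max C 1) ^ m * m.factorial * 2 ^ m) * PP :=
        mul_le_mul_of_nonneg_right hconst hPP0
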